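/- Let S ⊆ h(R) be multiplicatively closed with saturation S* = { r ∈ h(R) : r/1 is a unit in S⁻¹R }, and let P be a graded submodule of M with (P :_R M) ∩ S = ∅. Then P is a graded classical S-primary submodule of M if and only if P is a graded classical S*-primary submodule of M. -/

import Mathlib

variable {G : Type*} [AddCommGroup G] [DecidableEq G]
variable {R : Type*} [CommRing R] (𝒜 : G → AddSubmonoid R) [GradedRing 𝒜]
variable {M : Type*} [AddCommGroup M] [Module R M]
variable (ℳ : G → AddSubmonoid M) [SetLike.GradedSMul 𝒜 ℳ] [DirectSum.Decomposition ℳ]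

/-- `P` is a graded submodule of the graded module `M`. -/
def IsGradedSubmodule (P : Submodule R M) : Prop :=
  ∀ m ∈ P, ∀ g : G, (DirectSum.decompose ℳ m g : M) ∈ P

/-- `P` is a graded classical primary submodule of `M`. -/
def IsGrClPrimary (P : Submodule R M) : Prop :=
  IsGradedSubmodule ℳ P ∧ P ≠ ⊤ ∧
    ∀ x y : R, ∀ m : M, SetLike.IsHomogeneousElem 𝒜 x → SetLike.IsHomogeneousElem 𝒜 y →
      SetLike.IsHomogeneousElem ℳ m → (x * y) • m ∈ P →
        x • m ∈ P ∨ ∃ n : ℕ, 0 < n ∧ y ^ n • m ∈ P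

/-- `P` is a graded classical `S`-primary submodule of `M`;
this includes the requirement `(P :_R M) ∩ S = ∅`. -/
def IsGrClSPrimary (S : Submonoid R) (P : Submodule R M) : Prop :=
  IsGradedSubmodule ℳ P ∧ Disjoint ((P.colon ⊤ : Ideal R) : Set R) (S : Set R) ∧
    ∃ s ∈ S, ∀ x y : R, ∀ m : M, SetLike.IsHomogeneousElem 𝒜 x → SetLike.IsHomogeneousElem 𝒜 y →
      SetLike.IsHomogeneousElem ℳ m → (x * y) • m ∈ P →
        (s * x) • m ∈ P ∨ ∃ n : ℕ, 0 < n ∧ (s * y ^ n) • m ∈ P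

/-- The saturation `S*` of `S`: the homogeneous elements `r` with `r/1` a unit in `S⁻¹R`. -/
def gradedSaturation (S : Submonoid R) : Submonoid R where
  carrier := {r : R | SetLike.IsHomogeneousElem 𝒜 r ∧ IsUnit (algebraMap R (Localization S) r)}
  one_mem' := ⟨SetLike.isHomogeneousElem_one 𝒜, by simp⟩
  mul_mem' := fun ha hb =>
    ⟨SetLike.IsHomogeneousElem.mul ha.1 hb.1, by rw [map_mul]; exact ha.2.mul hb.2⟩

theorem exists_mul_mem_of_isUnit {R : Type*} [CommRing R] (S : Submonoid R) (r : R)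
    (h : IsUnit (algebraMap R (Localization S) r)) : ∃ a : R, r * a ∈ S := by
  obtain ⟨z, hz⟩ := isUnit_iff_exists_inv.mp h
  obtain ⟨⟨c, t⟩, rfl⟩ := IsLocalization.mk'_surjective S z
  have : algebraMap R (Localization S) (r * c) = algebraMap R (Localization S) (t : R) := by
    rw [map_mul]
    have := IsLocalization.mk'_spec (Localization S) c t
    calc algebraMap R (Localization S) r * algebraMap R (Localization S) c
        = (algebraMap R (Localization S) r * IsLocalization.mk' (Localization S) c t) *
            algebraMap R (Localization S) (t : R) := by rw [mul_assoc, this]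
      _ = algebraMap R (Localization S) (t : R) := by rw [hz, one_mul]
  obtain ⟨u, hu⟩ := (IsLocalization.eq_iff_exists S (Localization S)).mp this
  exact ⟨c * u, by
    have : r * (c * u) = (t : R) * u := by
      rw [← mul_assoc, mul_comm (r*c) (u:R), mul_comm (t:R) (u:R)]; exact hu
    rw [this]; exact S.mul_mem t.2 u.2⟩

/-- `P` (with `(P :_R M) ∩ S = ∅`) is graded classical `S`-primary iff it is
graded classical `S*`-primary, where `S*` is the saturation of `S`. -/
theorem isGrClSPrimary_iff_saturation (S : Submonoid R)
    (hS : (S : Set R) ⊆ {r | SetLike.IsHomogeneousElem 𝒜 r}) (P : Submodule R M)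
    (hgr : IsGradedSubmodule ℳ P)
    (hdisj : Disjoint ((P.colon ⊤ : Ideal R) : Set R) (S : Set R)) :
    IsGrClSPrimary 𝒜 ℳ S P ↔ IsGrClSPrimary 𝒜 ℳ (gradedSaturation 𝒜 S) P := by
  have hsub : (S : Set R) ⊆ (gradedSaturation 𝒜 S : Set R) := fun s hs =>
    ⟨hS hs, IsLocalization.map_units (Localization S) ⟨s, hs⟩⟩
  have hdisj' : Disjoint ((P.colon ⊤ : Ideal R) : Set R) ((gradedSaturation 𝒜 S) : Set R) := by
    rw [Set.disjoint_left]
    intro r hr hr'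
    obtain ⟨a, ha⟩ := exists_mul_mem_of_isUnit S r hr'.2
    exact Set.disjoint_left.mp hdisj (Ideal.mul_mem_right a _ hr) ha
  constructor
  · rintro ⟨_, _, s, hs, hprop⟩
    exact ⟨hgr, hdisj', s, hsub hs, hprop⟩
  · rintro ⟨_, _, s, hs, hprop⟩
    obtain ⟨a, ha⟩ := exists_mul_mem_of_isUnit S s hs.2
    refine ⟨hgr, hdisj, s * a, ha, fun x y m hx hy hm hxy => ?_⟩
    rcases hprop x y m hx hy hm hxy with h | ⟨n, hn, h⟩
    · left
      have : (s * a * x) • m = a • ((s * x) • m) := by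
        rw [smul_smul]; ring_nf
      rw [this]; exact P.smul_mem a h
    · right
      refine ⟨n, hn, ?_⟩
      have : (s * a * y ^ n) • m = a • ((s * y ^ n) • m) := by
        rw [smul_smul]; ring_nf
      rw [this]; exact P.smul_mem a h
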